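/- In a multipartite tournament with no 1-Duke, every m-Duke is an (m+1)-King, i.e., it has a directed path of length at most m+1 to every other vertex, including those in its own partite set. -/
import Mathlib


/-- An orientation of a complete multipartite graph: vertices `V`, partite sets
given as fibers of `part : V → ι`, and `peck` the arc relation. Between any two
vertices in different partite sets there is exactly one arc, and there are no
arcs within a partite set. -/
structure MTour (V : Type*) (ι : Type*) where
  part : V → ι
  peck : V → V → Prop
  complete : ∀ u v, part u ≠ part v → peck u v ∨ peck v u
  inter : ∀ u v, peck u v → part u ≠ part v
  asymm : ∀ u v, peck u v → ¬ peck v u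

namespace MTour

variable {V ι : Type*}

/-- There is a directed path of length at most `m` from `d` to `c`. -/
def hasPath (T : MTour V ι) (m : ℕ) (d c : V) : Prop :=
  ∃ k ≤ m, ∃ f : ℕ → V, f 0 = d ∧ f k = c ∧ ∀ i < k, T.peck (f i) (f (i + 1))

/-- `d` is an `m`-Duke: every vertex in a different partite set is reachable
from `d` by a directed path of length at most `m`. -/
def isDuke (T : MTour V ι) (m : ℕ) (d : V) : Prop :=
  ∀ c, T.part c ≠ T.part d → T.hasPath m d c

/-- `d` is an `m`-King: every other vertex is reachable from `d` by a directed
path of length at most `m`. -/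
def isKing (T : MTour V ι) (m : ℕ) (d : V) : Prop :=
  ∀ c, c ≠ d → T.hasPath m d c

/-- The out-degree of a vertex. -/
noncomputable def outDeg (T : MTour V ι) (v : V) : ℕ :=
  Nat.card {w // T.peck v w}

/-- `e` eclipses `d`: same partite set, `e` pecks everything `d` pecks, and
at least one vertex `d` does not peck. -/
def eclipses (T : MTour V ι) (e d : V) : Prop :=
  T.part e = T.part d ∧ (∀ c, T.peck d c → T.peck e c) ∧ ∃ c, T.peck e c ∧ ¬ T.peck d c

/-- `d` is non-eclipsed: no vertex of its partite set eclipses it. -/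
def nonEclipsed (T : MTour V ι) (d : V) : Prop :=
  ∀ e, ¬ T.eclipses e d

/-- Partite set `i` dominates partite set `j`: some vertex of `i` pecks all of `j`. -/
def Dominates (T : MTour V ι) (i j : ι) : Prop :=
  ∃ v, T.part v = i ∧ ∀ w, T.part w = j → T.peck v w

end MTour

/-- In a multipartite tournament with no 1-Duke, every `m`-Duke is an
`(m+1)`-King. -/
theorem stmt12 {V ι : Type*} [Finite V] (T : MTour V ι)
    (hno1 : ¬ ∃ v, T.isDuke 1 v) (m : ℕ) (d : V) (hd : T.isDuke m d) :
    T.isKing (m + 1) d := by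
  intro c _hc
  by_cases hpc : T.part c = T.part d
  · -- c is in d's partite set; use that c is not a 1-Duke
    have hc1 : ¬ T.isDuke 1 c := fun h => hno1 ⟨c, h⟩
    rw [MTour.isDuke] at hc1
    push_neg at hc1
    obtain ⟨b, hb, hnp⟩ := hc1
    have hcb : ¬ T.peck c b := by
      intro h
      exact hnp ⟨1, le_refl 1, fun i => if i = 0 then c else b, by simp, by simp,
        fun i hi => by interval_cases i; simpa using h⟩
    have hbc : T.peck b c := (T.complete b c hb).resolve_right hcb
    obtain ⟨k, hk, f, h0, hkb, hp⟩ := hd b (hpc ▸ hb)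
    refine ⟨k + 1, by omega, fun i => if i ≤ k then f i else c, by simp [h0],
      by simp, fun i hi => ?_⟩
    rcases Nat.lt_or_ge i k with h | h
    · simpa [Nat.le_of_lt h, Nat.succ_le_of_lt h] using hp i h
    · have : i = k := by omega
      subst this
      simpa [hkb] using hbc
  · obtain ⟨k, hk, f, h0, hkc, hp⟩ := hd c hpc
    exact ⟨k, by omega, f, h0, hkc, hp⟩
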